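/- Let G be a connected graph of order n ≥ 2, let H be a connected graph with at least two vertices, and let v be a vertex of H that belongs to some strong metric basis of H. Then n·dim_s(H) − 1 ≤ dim_s(G∘_v H) ≤ (|∂(H)| − 1)(n − 1) + dim_s(H) − 1. -/

import Mathlib

namespace RootedStrong

variable {V : Type*}

/-- `u` is maximally distant from `v`: every neighbor `w` of `u` satisfies `d(v,w) ≤ d(u,v)`. -/
def MaxDistant (G : SimpleGraph V) (u v : V) : Prop :=
  ∀ w, G.Adj u w → G.dist v w ≤ G.dist u v

/-- `u` and `v` are mutually maximally distant. -/
def MMD (G : SimpleGraph V) (u v : V) : Prop :=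
  MaxDistant G u v ∧ MaxDistant G v u

/-- The boundary `∂(G)` of a graph. -/
def boundary (G : SimpleGraph V) : Set V := {u | ∃ v, MMD G u v}

/-- A vertex is simplicial if its neighborhood induces a complete graph. -/
def Simplicial (G : SimpleGraph V) (u : V) : Prop :=
  ∀ x ∈ G.neighborSet u, ∀ y ∈ G.neighborSet u, x ≠ y → G.Adj x y

/-- The set `σ(G)` of simplicial vertices. -/
def simplicialSet (G : SimpleGraph V) : Set V := {u | Simplicial G u}

/-- `w` strongly resolves `u` and `v`. -/
def StronglyResolves (G : SimpleGraph V) (w u v : V) : Prop :=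
  G.dist w u = G.dist w v + G.dist v u ∨ G.dist w v = G.dist w u + G.dist u v

/-- A set of vertices is a strong metric generator if every pair of distinct vertices is
strongly resolved by some of its elements. -/
def IsStrongGenerator (G : SimpleGraph V) (S : Set V) : Prop :=
  ∀ u v : V, u ≠ v → ∃ w ∈ S, StronglyResolves G w u v

/-- The strong metric dimension of a graph. -/
noncomputable def sdim (G : SimpleGraph V) [Fintype V] : ℕ :=
  sInf {n | ∃ S : Finset V, S.card = n ∧ IsStrongGenerator G (S : Set V)}

/-- A strong metric basis: a strong metric generator of minimum cardinality. -/
def IsStrongBasis (G : SimpleGraph V) [Fintype V] (S : Finset V) : Prop :=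
  IsStrongGenerator G (S : Set V) ∧ S.card = sdim G

/-- The rooted product graph `G ∘_v H`. -/
def rootedProd {α β : Type*} (G : SimpleGraph α) (H : SimpleGraph β) (v : β) :
    SimpleGraph (α × β) where
  Adj p q := (p.1 = q.1 ∧ H.Adj p.2 q.2) ∨ (p.2 = v ∧ q.2 = v ∧ G.Adj p.1 q.1)
  symm := by
    constructor
    rintro ⟨a, x⟩ ⟨b, y⟩ (⟨h1, h2⟩ | ⟨h1, h2, h3⟩)
    · exact Or.inl ⟨h1.symm, h2.symm⟩
    · exact Or.inr ⟨h2, h1, h3.symm⟩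
  loopless := by
    constructor
    rintro ⟨a, x⟩ (⟨_, h2⟩ | ⟨_, _, h3⟩)
    · exact H.irrefl h2
    · exact G.irrefl h3

/-- Two distinct vertices are true twins if they have equal closed neighborhoods. -/
def TrueTwins (G : SimpleGraph V) (x y : V) : Prop :=
  x ≠ y ∧ ∀ z, (z = x ∨ G.Adj x z) ↔ (z = y ∨ G.Adj y z)

/-- A twin-free clique: a clique containing no pair of true twins. -/
def IsTwinFreeClique (G : SimpleGraph V) (X : Set V) : Prop :=
  (∀ x ∈ X, ∀ y ∈ X, x ≠ y → G.Adj x y) ∧ ∀ x ∈ X, ∀ y ∈ X, ¬ TrueTwins G x y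

/-- The twin-free clique number `ϖ(G)`. -/
noncomputable def twinFreeCliqueNum (G : SimpleGraph V) : ℕ :=
  sSup {n | ∃ X : Set V, IsTwinFreeClique G X ∧ X.ncard = n}


/-! ### Auxiliary machinery -/

open SimpleGraph

section AuxGeneric
variable {W : Type*}

lemma adj_dist_le' {G' : SimpleGraph W} {x y : W} (h : G'.Adj x y) : G'.dist x y ≤ 1 :=
  le_of_eq (SimpleGraph.dist_eq_one_iff_adj.mpr h)

lemma univ_isStrongGenerator (G : SimpleGraph W) : IsStrongGenerator G Set.univ := by
  intro u w hne
  exact ⟨u, trivial, Or.inr (by simp [SimpleGraph.dist_self])⟩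

lemma sdim_le_card {G : SimpleGraph W} [Fintype W] {S : Finset W}
    (h : IsStrongGenerator G (S : Set W)) : sdim G ≤ S.card :=
  Nat.sInf_le ⟨S, rfl, h⟩

lemma exists_sdim_basis (G : SimpleGraph W) [Fintype W] :
    ∃ S : Finset W, S.card = sdim G ∧ IsStrongGenerator G (S : Set W) := by
  have h : sdim G ∈ {n | ∃ S : Finset W, S.card = n ∧ IsStrongGenerator G (S : Set W)} :=
    Nat.sInf_mem ⟨(Finset.univ : Finset W).card, Finset.univ, rfl, by
      simpa using univ_isStrongGenerator G⟩
  exact h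

lemma one_le_sdim {G : SimpleGraph W} [Fintype W] (h : ∃ x y : W, x ≠ y) : 1 ≤ sdim G := by
  by_contra h0
  obtain ⟨S, hcard, hgen⟩ := exists_sdim_basis G
  obtain ⟨x, y, hxy⟩ := h
  have hS : S.card = 0 := by omega
  obtain ⟨w, hw, -⟩ := hgen x y hxy
  simp [Finset.card_eq_zero.mp hS] at hw

end AuxGeneric

section RPdist
variable {α β : Type*} {G : SimpleGraph α} {H : SimpleGraph β} {v : β}

def homH (G : SimpleGraph α) (H : SimpleGraph β) (v : β) (a : α) : H →g rootedProd G H v :=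
  ⟨fun y => (a, y), fun h => Or.inl ⟨rfl, h⟩⟩

def homG (G : SimpleGraph α) (H : SimpleGraph β) (v : β) : G →g rootedProd G H v :=
  ⟨fun u => (u, v), fun h => Or.inr ⟨rfl, rfl, h⟩⟩

open Classical in
noncomputable def DD (G : SimpleGraph α) (H : SimpleGraph β) (v : β) (p q : α × β) : ℕ :=
  if p.1 = q.1 then H.dist p.2 q.2 else H.dist p.2 v + G.dist p.1 q.1 + H.dist v q.2

lemma DD_same (a : α) (x y : β) : DD G H v (a,x) (a,y) = H.dist x y := by
  unfold DD; exact if_pos rfl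

lemma DD_cross {a b : α} (h : a ≠ b) (x y : β) :
    DD G H v (a,x) (b,y) = H.dist x v + G.dist a b + H.dist v y := by
  unfold DD; exact if_neg h

lemma rp_reachable (hG : G.Connected) (hH : H.Connected) (p q : α × β) :
    (rootedProd G H v).Reachable p q := by
  obtain ⟨a, x⟩ := p
  obtain ⟨b, y⟩ := q
  obtain ⟨p1⟩ := hH x v
  obtain ⟨p2⟩ := hG a b
  obtain ⟨p3⟩ := hH v y
  exact ⟨((p1.map (homH G H v a)).append ((p2.map (homG G H v)).append
    (p3.map (homH G H v b))))⟩

lemma rp_dist_le_same (hH : H.Connected) (a : α) (x y : β) :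
    (rootedProd G H v).dist (a, x) (a, y) ≤ H.dist x y := by
  obtain ⟨p, hp⟩ := hH.exists_walk_length_eq_dist x y
  calc (rootedProd G H v).dist (a, x) (a, y) ≤ (p.map (homH G H v a)).length :=
        SimpleGraph.dist_le _
    _ = H.dist x y := by rw [SimpleGraph.Walk.length_map, hp]

lemma rp_dist_le_cross (hG : G.Connected) (hH : H.Connected) (a b : α) (x y : β) :
    (rootedProd G H v).dist (a, x) (b, y) ≤ H.dist x v + G.dist a b + H.dist v y := by
  obtain ⟨p1, hp1⟩ := hH.exists_walk_length_eq_dist x v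
  obtain ⟨p2, hp2⟩ := hG.exists_walk_length_eq_dist a b
  obtain ⟨p3, hp3⟩ := hH.exists_walk_length_eq_dist v y
  calc (rootedProd G H v).dist (a, x) (b, y)
      ≤ ((p1.map (homH G H v a)).append ((p2.map (homG G H v)).append
          (p3.map (homH G H v b)))).length := SimpleGraph.dist_le _
    _ = H.dist x v + G.dist a b + H.dist v y := by
        erw [SimpleGraph.Walk.length_append, SimpleGraph.Walk.length_append,
          SimpleGraph.Walk.length_map, SimpleGraph.Walk.length_map, SimpleGraph.Walk.length_map,
          hp1, hp2, hp3]
        omega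

lemma DD_lipschitz (hG : G.Connected) (hH : H.Connected) (p q r : α × β)
    (h : (rootedProd G H v).Adj p q) : DD G H v p r ≤ DD G H v q r + 1 := by
  classical
  obtain ⟨a, x⟩ := p
  obtain ⟨b, y⟩ := q
  obtain ⟨c, z⟩ := r
  rcases h with ⟨h1, h2⟩ | ⟨h1, h2, h3⟩
  · simp only at h1 h2
    subst h1
    have hxy : H.dist x y ≤ 1 := adj_dist_le' h2
    have hyx : H.dist y x ≤ 1 := adj_dist_le' h2.symm
    by_cases hac : a = c
    · subst hac
      rw [DD_same, DD_same]
      have := hH.dist_triangle (u := x) (v := y) (w := z)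
      omega
    · rw [DD_cross hac, DD_cross hac]
      have := hH.dist_triangle (u := x) (v := y) (w := v)
      omega
  · simp only at h1 h2 h3
    subst x; subst y
    have hab : a ≠ b := h3.ne
    have hab1 : G.dist a b ≤ 1 := adj_dist_le' h3
    have hba1 : G.dist b a ≤ 1 := adj_dist_le' h3.symm
    by_cases hac : a = c
    · subst hac
      have hbc : b ≠ a := fun h => hab h.symm
      rw [DD_same, DD_cross hbc]
      have h0 : H.dist v v = 0 := SimpleGraph.dist_self
      omega
    · by_cases hbc : b = c
      · subst hbc
        rw [DD_cross hac, DD_same]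
        have h0 : H.dist v v = 0 := SimpleGraph.dist_self
        omega
      · rw [DD_cross hac, DD_cross hbc]
        have := hG.dist_triangle (u := a) (v := b) (w := c)
        omega

lemma DD_le_length (hG : G.Connected) (hH : H.Connected) {p q : α × β}
    (w : (rootedProd G H v).Walk p q) : DD G H v p q ≤ w.length := by
  classical
  induction w with
  | nil =>
      obtain ⟨a, x⟩ := p
      rw [DD_same]
      simp [SimpleGraph.dist_self, SimpleGraph.Walk.length_nil]
  | cons h w ih =>
      calc DD G H v _ _ ≤ DD G H v _ _ + 1 := DD_lipschitz hG hH _ _ _ h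
        _ ≤ w.length + 1 := by omega
        _ = _ := by simp [SimpleGraph.Walk.length_cons]

lemma rp_dist_eq (hG : G.Connected) (hH : H.Connected) (p q : α × β) :
    (rootedProd G H v).dist p q = DD G H v p q := by
  classical
  apply le_antisymm
  · obtain ⟨a, x⟩ := p
    obtain ⟨b, y⟩ := q
    by_cases hab : a = b
    · subst hab
      rw [DD_same]
      exact rp_dist_le_same hH a x y
    · rw [DD_cross hab]
      exact rp_dist_le_cross hG hH a b x y
  · obtain ⟨w, hw⟩ := (rp_reachable hG hH p q).exists_walk_length_eq_dist
    calc DD G H v p q ≤ w.length := DD_le_length hG hH w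
      _ = _ := hw

lemma rp_dist_same (hG : G.Connected) (hH : H.Connected) (a : α) (x y : β) :
    (rootedProd G H v).dist (a, x) (a, y) = H.dist x y := by
  rw [rp_dist_eq hG hH, DD_same]

lemma rp_dist_cross (hG : G.Connected) (hH : H.Connected) {a b : α} (hab : a ≠ b) (x y : β) :
    (rootedProd G H v).dist (a, x) (b, y) = H.dist x v + G.dist a b + H.dist v y := by
  rw [rp_dist_eq hG hH, DD_cross hab]

end RPdist

section BoundaryMachinery
variable {β : Type*} [Fintype β] {H : SimpleGraph β} {v : β}

lemma dist_lt_card (hH : H.Connected) (x y : β) : H.dist x y < Fintype.card β := by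
  obtain ⟨p, hp, hl⟩ := hH.exists_path_of_dist x y
  rw [← hl]
  exact hp.length_lt

lemma exists_maxDistant_beyond (hH : H.Connected) (y x : β) :
    ∃ u, MaxDistant H u y ∧ H.dist u y = H.dist u x + H.dist x y := by
  suffices h : ∀ k x, Fintype.card β - H.dist y x ≤ k →
      ∃ u, MaxDistant H u y ∧ H.dist u y = H.dist u x + H.dist x y from h _ x le_rfl
  intro k
  induction k with
  | zero =>
      intro x hx
      have := dist_lt_card hH y x
      omega
  | succ k ih =>
      intro x hx
      by_cases hmax : MaxDistant H x y
      · exact ⟨x, hmax, by simp [SimpleGraph.dist_self]⟩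
      · simp only [MaxDistant, not_forall] at hmax
        obtain ⟨w, hadj, hgt⟩ := hmax
        push_neg at hgt
        have hxw : H.dist x w ≤ 1 := adj_dist_le' hadj
        have hc1 : H.dist x y = H.dist y x := SimpleGraph.dist_comm
        have htri : H.dist y w ≤ H.dist y x + H.dist x w := hH.dist_triangle
        have h1 : H.dist y w = H.dist y x + 1 := by omega
        obtain ⟨u, hu, heq⟩ := ih w (by omega)
        refine ⟨u, hu, ?_⟩
        have hc2 : H.dist w y = H.dist y w := SimpleGraph.dist_comm
        have t1 : H.dist u x ≤ H.dist u w + H.dist w x := hH.dist_triangle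
        have hwx : H.dist w x ≤ 1 := adj_dist_le' hadj.symm
        have t2 : H.dist u y ≤ H.dist u x + H.dist x y := hH.dist_triangle
        omega

omit [Fintype β] in
lemma maxDistant_of_beyond (hH : H.Connected) {u y y' : β} (h : MaxDistant H u y)
    (h2 : H.dist y' u = H.dist y' y + H.dist y u) : MaxDistant H u y' := by
  intro w hadj
  have h3 : H.dist y w ≤ H.dist u y := h w hadj
  have t : H.dist y' w ≤ H.dist y' y + H.dist y w := hH.dist_triangle
  have c1 : H.dist y u = H.dist u y := SimpleGraph.dist_comm
  have c2 : H.dist u y' = H.dist y' u := SimpleGraph.dist_comm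
  omega

lemma exists_boundary_beyond (hH : H.Connected) (x y : β) :
    ∃ u ∈ boundary H, H.dist u y = H.dist u x + H.dist x y := by
  obtain ⟨u, hu, heq⟩ := exists_maxDistant_beyond hH y x
  obtain ⟨y', hy', heq'⟩ := exists_maxDistant_beyond hH u y
  exact ⟨u, ⟨y', maxDistant_of_beyond hH hu heq', hy'⟩, heq⟩

lemma exists_MMD_beyond (hH : H.Connected) (x y : β) :
    ∃ u y', MMD H u y' ∧ H.dist u y = H.dist u x + H.dist x y ∧
      H.dist y' u = H.dist y' y + H.dist y u := by
  obtain ⟨u, hu, heq⟩ := exists_maxDistant_beyond hH y x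
  obtain ⟨y', hy', heq'⟩ := exists_maxDistant_beyond hH u y
  exact ⟨u, y', ⟨maxDistant_of_beyond hH hu heq', hy'⟩, heq, heq'⟩

omit [Fintype β] in
lemma exists_geodesic_neighbor (hH : H.Connected) {w u' : β} (hne : u' ≠ w) :
    ∃ z, H.Adj u' z ∧ H.dist w z + 1 = H.dist w u' := by
  obtain ⟨p, hp⟩ := hH.exists_walk_length_eq_dist u' w
  cases p with
  | nil => exact absurd rfl hne
  | @cons _ z _ hadj q =>
      refine ⟨z, hadj, ?_⟩
      rw [SimpleGraph.Walk.length_cons] at hp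
      have h1 : H.dist z w ≤ q.length := SimpleGraph.dist_le q
      have hc1 : H.dist w z = H.dist z w := SimpleGraph.dist_comm
      have hc2 : H.dist w u' = H.dist u' w := SimpleGraph.dist_comm
      have h3 : H.dist u' w ≤ H.dist u' z + H.dist z w := hH.dist_triangle
      have h4 : H.dist u' z ≤ 1 := adj_dist_le' hadj
      omega

omit [Fintype β] in
lemma resolver_of_MMD (hH : H.Connected) {u u' w : β} (hm : MMD H u u') (hne : u ≠ u')
    (hw : StronglyResolves H w u u') : w = u ∨ w = u' := by
  by_contra hc
  push_neg at hc
  obtain ⟨hwu, hwu'⟩ := hc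
  rcases hw with h | h
  · obtain ⟨z, hadj, hz⟩ := exists_geodesic_neighbor hH (fun h' => hwu' h'.symm)
    have hmax := hm.2 z hadj
    have t : H.dist w u ≤ H.dist w z + H.dist z u := hH.dist_triangle
    have c1 : H.dist u z = H.dist z u := SimpleGraph.dist_comm
    have c2 : H.dist u' u = H.dist u u' := SimpleGraph.dist_comm
    omega
  · obtain ⟨z, hadj, hz⟩ := exists_geodesic_neighbor hH (fun h' => hwu h'.symm)
    have hmax := hm.1 z hadj
    have t : H.dist w u' ≤ H.dist w z + H.dist z u' := hH.dist_triangle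
    have c1 : H.dist u' z = H.dist z u' := SimpleGraph.dist_comm
    have c2 : H.dist u u' = H.dist u' u := SimpleGraph.dist_comm
    omega

lemma not_MMD_self (hH : H.Connected) (h2b : 2 ≤ Fintype.card β) (u : β) : ¬ MMD H u u := by
  rintro ⟨h1, -⟩
  have hnt : Nontrivial β := Fintype.one_lt_card_iff_nontrivial.mp h2b
  obtain ⟨x, hx⟩ := exists_ne u
  obtain ⟨z, hadj, -⟩ := exists_geodesic_neighbor hH (fun h => hx h.symm) (w := x)
  have := h1 z hadj
  have h0 : H.dist u u = 0 := SimpleGraph.dist_self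
  have hpos : 0 < H.dist u z := hH.pos_dist_of_ne hadj.ne
  omega

lemma generator_of_cover (hH : H.Connected) (h2b : 2 ≤ Fintype.card β) {S : Set β}
    (hS : ∀ u u' : β, MMD H u u' → u ≠ u' → u ∈ S ∨ u' ∈ S) :
    IsStrongGenerator H S := by
  intro x y _
  obtain ⟨u, y', hm, heq, heq'⟩ := exists_MMD_beyond hH x y
  have hneq : u ≠ y' := by
    rintro rfl
    exact not_MMD_self hH h2b u hm
  rcases hS u y' hm hneq with h | h
  · exact ⟨u, h, Or.inr heq⟩
  · refine ⟨y', h, Or.inl ?_⟩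
    have t1 : H.dist y' x ≤ H.dist y' y + H.dist y x := hH.dist_triangle
    have t2 : H.dist y' u ≤ H.dist y' x + H.dist x u := hH.dist_triangle
    have c1 : H.dist y u = H.dist u y := SimpleGraph.dist_comm
    have c2 : H.dist x u = H.dist u x := SimpleGraph.dist_comm
    have c3 : H.dist y x = H.dist x y := SimpleGraph.dist_comm
    omega

omit [Fintype β] in
lemma MMD_symm {u u' : β} (h : MMD H u u') : MMD H u' u := ⟨h.2, h.1⟩

omit [Fintype β] in
lemma cover_of_generator (hH : H.Connected) {S : Set β} (hS : IsStrongGenerator H S)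
    {u u' : β} (hm : MMD H u u') (hne : u ≠ u') : u ∈ S ∨ u' ∈ S := by
  obtain ⟨w, hw, hr⟩ := hS u u' hne
  rcases resolver_of_MMD hH hm hne hr with rfl | rfl
  · exact Or.inl hw
  · exact Or.inr hw

lemma mem_boundary_of_basis (hH : H.Connected) (h2b : 2 ≤ Fintype.card β) {W : Finset β}
    (hgenW : IsStrongGenerator H (W : Set β)) (hcard : W.card = sdim H) (hvW : v ∈ W) :
    v ∈ boundary H := by
  classical
  by_contra hvb
  have hgen : IsStrongGenerator H ((W.erase v : Finset β) : Set β) := by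
    apply generator_of_cover hH h2b
    intro u u' hm hne
    have hu : u ≠ v := by rintro rfl; exact hvb ⟨u', hm⟩
    have hu' : u' ≠ v := by rintro rfl; exact hvb ⟨u, MMD_symm hm⟩
    rcases cover_of_generator hH hgenW hm hne with h | h
    · exact Or.inl (by simpa [Finset.mem_erase, hu] using h)
    · exact Or.inr (by simpa [Finset.mem_erase, hu'] using h)
  have h1 : sdim H ≤ (W.erase v).card := sdim_le_card hgen
  have h2 : (W.erase v).card = W.card - 1 := Finset.card_erase_of_mem hvW
  have h3 : 1 ≤ sdim H := one_le_sdim (by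
    have hnt : Nontrivial β := Fintype.one_lt_card_iff_nontrivial.mp h2b
    obtain ⟨x, y, hxy⟩ := exists_pair_ne β
    exact ⟨x, y, hxy⟩)
  omega

lemma exists_boundary_ne (hH : H.Connected) (h2b : 2 ≤ Fintype.card β) (v : β) :
    ∃ u ∈ boundary H, u ≠ v := by
  have hnt : Nontrivial β := Fintype.one_lt_card_iff_nontrivial.mp h2b
  obtain ⟨x, hx⟩ := exists_ne v
  obtain ⟨u, hu, heq⟩ := exists_boundary_beyond hH x v
  refine ⟨u, hu, ?_⟩
  have hpos : 0 < H.dist x v := hH.pos_dist_of_ne hx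
  rintro rfl
  have h0 : H.dist u u = 0 := SimpleGraph.dist_self
  omega

end BoundaryMachinery

section MainBounds
variable {α β : Type*} [Fintype α] [Fintype β] {G : SimpleGraph α} {H : SimpleGraph β} {v : β}

lemma lower_bound (hG : G.Connected) (hH : H.Connected) (h2b : 2 ≤ Fintype.card β) :
    Fintype.card α * sdim H ≤ sdim (rootedProd G H v) + 1 := by
  classical
  obtain ⟨S, hScard, hSgen⟩ := exists_sdim_basis (rootedProd G H v)
  set m := sdim H with hm
  set F : α → Finset β := fun a => Finset.univ.filter (fun z => (a, z) ∈ S) with hF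
  have hmemF : ∀ a z, z ∈ F a ↔ (a, z) ∈ S := by
    intro a z; simp [hF]
  have hsum : S.card = ∑ a : α, (F a).card := by
    rw [Finset.card_eq_sum_card_fiberwise (f := Prod.fst) (t := Finset.univ)
      (fun x _ => Finset.mem_univ _)]
    apply Finset.sum_congr rfl
    intro a _
    have himg : S.filter (fun p => p.1 = a) = (F a).image (fun z => (a, z)) := by
      ext ⟨c, z⟩
      simp only [Finset.mem_filter, Finset.mem_image, hmemF]
      constructor
      · rintro ⟨h1, h2⟩
        exact ⟨z, by rw [← h2]; exact h1, by rw [h2]⟩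
      · rintro ⟨z', hz', heq⟩
        injection heq with ha hz2
        subst ha; subst hz2
        exact ⟨hz', rfl⟩
    rw [himg, Finset.card_image_of_injective _ (fun z1 z2 h => by
      simpa using congrArg Prod.snd h)]
  have hFgen : ∀ a : α, IsStrongGenerator H ((insert v (F a) : Finset β) : Set β) := by
    intro a x y hxy
    obtain ⟨w, hwS, hr⟩ := hSgen (a, x) (a, y) (fun h => hxy (congrArg Prod.snd h))
    obtain ⟨c, z⟩ := w
    by_cases hca : c = a
    · rw [hca] at hwS hr
      refine ⟨z, Finset.mem_coe.mpr (Finset.mem_insert_of_mem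
        ((hmemF a z).mpr (Finset.mem_coe.mp hwS))), ?_⟩
      unfold StronglyResolves at hr ⊢
      rw [rp_dist_same hG hH, rp_dist_same hG hH, rp_dist_same hG hH,
        rp_dist_same hG hH] at hr
      exact hr
    · refine ⟨v, Finset.mem_coe.mpr (Finset.mem_insert_self v _), ?_⟩
      unfold StronglyResolves at hr ⊢
      rw [rp_dist_cross hG hH hca, rp_dist_cross hG hH hca, rp_dist_same hG hH,
        rp_dist_same hG hH] at hr
      rcases hr with h | h
      · left; omega
      · right; omega
  have hFlb : ∀ a : α, m ≤ (F a).card + 1 := by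
    intro a
    have h1 := sdim_le_card (hFgen a)
    have hle : (insert v (F a)).card ≤ (F a).card + 1 := Finset.card_insert_le _ _
    omega
  have hpair : ∀ a : α, (F a).card + 1 ≤ m →
      ∃ x y : β, x ≠ v ∧ (∀ z ∈ F a, ¬ StronglyResolves H z x y) ∧
        H.dist v x = H.dist v y + H.dist y x := by
    intro a ha
    have hnotgen : ¬ IsStrongGenerator H ((F a : Finset β) : Set β) := by
      intro hgen
      have := sdim_le_card hgen
      omega
    unfold IsStrongGenerator at hnotgen
    push_neg at hnotgen
    obtain ⟨x, y, hxy, hnores⟩ := hnotgen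
    have hnores' : ∀ z ∈ F a, ¬ StronglyResolves H z x y := by
      intro z hz
      exact hnores z (Finset.mem_coe.mpr hz)
    obtain ⟨w, hwmem, hwres⟩ := hFgen a x y hxy
    have hwv : w = v := by
      rcases Finset.mem_insert.mp (Finset.mem_coe.mp hwmem) with h | h
      · exact h
      · exact absurd hwres (hnores' w h)
    rw [hwv] at hwres
    rcases hwres with h | h
    · refine ⟨x, y, ?_, hnores', h⟩
      intro heq
      rw [heq] at h
      have h0 : H.dist v v = 0 := SimpleGraph.dist_self
      have h1 : H.dist v y = 0 := by omega
      exact hxy (heq.trans (hH.dist_eq_zero_iff.mp h1))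
    · refine ⟨y, x, ?_, fun z hz hr => hnores' z hz hr.symm, h⟩
      intro heq
      rw [heq] at h
      have h0 : H.dist v v = 0 := SimpleGraph.dist_self
      have h1 : H.dist v x = 0 := by omega
      exact hxy ((hH.dist_eq_zero_iff.mp h1).symm.trans heq.symm)
  have honebad : ∀ a b : α, a ≠ b → (F a).card + 1 ≤ m → (F b).card + 1 ≤ m → False := by
    intro a b hab ha hb
    obtain ⟨xa, ya, hxav, hnora, hva⟩ := hpair a ha
    obtain ⟨xb, yb, hxbv, hnorb, hvb⟩ := hpair b hb
    obtain ⟨w, hwS, hr⟩ := hSgen (a, xa) (b, xb) (fun h => hab (congrArg Prod.fst h))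
    obtain ⟨c, z⟩ := w
    have hgab : 0 < G.dist a b := hG.pos_dist_of_ne hab
    have hdvxa : 0 < H.dist v xa := hH.pos_dist_of_ne (Ne.symm hxav)
    have hdvxb : 0 < H.dist v xb := hH.pos_dist_of_ne (Ne.symm hxbv)
    have cgba : G.dist b a = G.dist a b := SimpleGraph.dist_comm
    have cxa : H.dist xa v = H.dist v xa := SimpleGraph.dist_comm
    have cxb : H.dist xb v = H.dist v xb := SimpleGraph.dist_comm
    have e3 : (rootedProd G H v).dist (b, xb) (a, xa)
        = H.dist xb v + G.dist b a + H.dist v xa := rp_dist_cross hG hH (Ne.symm hab) _ _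
    have e4 : (rootedProd G H v).dist (a, xa) (b, xb)
        = H.dist xa v + G.dist a b + H.dist v xb := rp_dist_cross hG hH hab _ _
    unfold StronglyResolves at hr
    by_cases hca : c = a
    · have e1 : (rootedProd G H v).dist (c, z) (a, xa) = H.dist z xa := by
        rw [hca]; exact rp_dist_same hG hH _ _ _
      have e2 : (rootedProd G H v).dist (c, z) (b, xb)
          = H.dist z v + G.dist a b + H.dist v xb := by
        rw [hca]; exact rp_dist_cross hG hH hab _ _
      rw [e1, e2, e3, e4] at hr
      have t1 : H.dist z xa ≤ H.dist z v + H.dist v xa := hH.dist_triangle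
      have hz : H.dist z v = H.dist z xa + H.dist xa v := by
        rcases hr with h | h <;> omega
      have hzS : z ∈ F a := (hmemF a z).mpr (by rw [← hca]; exact Finset.mem_coe.mp hwS)
      apply hnora z hzS
      right
      have t2 : H.dist z ya ≤ H.dist z xa + H.dist xa ya := hH.dist_triangle
      have t3 : H.dist z v ≤ H.dist z ya + H.dist ya v := hH.dist_triangle
      have c4 : H.dist ya v = H.dist v ya := SimpleGraph.dist_comm
      have c5 : H.dist ya xa = H.dist xa ya := SimpleGraph.dist_comm
      omega
    · by_cases hcb : c = b
      · have e1 : (rootedProd G H v).dist (c, z) (a, xa)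
            = H.dist z v + G.dist b a + H.dist v xa := by
          rw [hcb]; exact rp_dist_cross hG hH (Ne.symm hab) _ _
        have e2 : (rootedProd G H v).dist (c, z) (b, xb) = H.dist z xb := by
          rw [hcb]; exact rp_dist_same hG hH _ _ _
        rw [e1, e2, e3, e4] at hr
        have t1 : H.dist z xb ≤ H.dist z v + H.dist v xb := hH.dist_triangle
        have hz : H.dist z v = H.dist z xb + H.dist xb v := by
          rcases hr with h | h <;> omega
        have hzS : z ∈ F b := (hmemF b z).mpr (by rw [← hcb]; exact Finset.mem_coe.mp hwS)
        apply hnorb z hzS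
        right
        have t2 : H.dist z yb ≤ H.dist z xb + H.dist xb yb := hH.dist_triangle
        have t3 : H.dist z v ≤ H.dist z yb + H.dist yb v := hH.dist_triangle
        have c4 : H.dist yb v = H.dist v yb := SimpleGraph.dist_comm
        have c5 : H.dist yb xb = H.dist xb yb := SimpleGraph.dist_comm
        omega
      · have e1 : (rootedProd G H v).dist (c, z) (a, xa)
            = H.dist z v + G.dist c a + H.dist v xa := rp_dist_cross hG hH hca _ _
        have e2 : (rootedProd G H v).dist (c, z) (b, xb)
            = H.dist z v + G.dist c b + H.dist v xb := rp_dist_cross hG hH hcb _ _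
        rw [e1, e2, e3, e4] at hr
        have t1 : G.dist c a ≤ G.dist c b + G.dist b a := hG.dist_triangle
        have t2 : G.dist c b ≤ G.dist c a + G.dist a b := hG.dist_triangle
        rcases hr with h | h <;> omega
  by_cases hall : ∀ a : α, m ≤ (F a).card
  · have hsle : Fintype.card α * m ≤ ∑ a : α, (F a).card := by
      calc Fintype.card α * m = ∑ _a : α, m := by
            rw [Finset.sum_const, Finset.card_univ, smul_eq_mul]
        _ ≤ _ := Finset.sum_le_sum (fun a _ => hall a)
    omega
  · push_neg at hall
    obtain ⟨a0, ha0⟩ := hall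
    have hrest : ∀ b ∈ Finset.univ.erase a0, m ≤ (F b).card := by
      intro b hb
      rw [Finset.mem_erase] at hb
      by_contra hlt
      exact honebad a0 b (Ne.symm hb.1) (by omega) (by omega)
    have hsum2 : ∑ a : α, (F a).card
        = (F a0).card + ∑ b ∈ Finset.univ.erase a0, (F b).card :=
      (Finset.add_sum_erase _ _ (Finset.mem_univ a0)).symm
    have hge : (Finset.univ.erase a0).card * m ≤ ∑ b ∈ Finset.univ.erase a0, (F b).card := by
      calc (Finset.univ.erase a0).card * m = ∑ _b ∈ Finset.univ.erase a0, m := by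
            rw [Finset.sum_const, smul_eq_mul]
        _ ≤ _ := Finset.sum_le_sum hrest
    have hce : (Finset.univ.erase a0).card = Fintype.card α - 1 := by
      rw [Finset.card_erase_of_mem (Finset.mem_univ _), Finset.card_univ]
    rw [hce] at hge
    have hfa0 : m ≤ (F a0).card + 1 := hFlb a0
    have hn1 : 1 ≤ Fintype.card α := by
      have : Nonempty α := hG.nonempty
      exact Fintype.card_pos
    have hkey : (Fintype.card α - 1) * m + m = Fintype.card α * m := by
      have h : (Fintype.card α - 1) + 1 = Fintype.card α := by omega
      calc (Fintype.card α - 1) * m + m = ((Fintype.card α - 1) + 1) * m := by ring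
        _ = _ := by rw [h]
    omega

lemma upper_bound (hG : G.Connected) (hH : H.Connected) (h2a : 2 ≤ Fintype.card α)
    (h2b : 2 ≤ Fintype.card β) {W : Finset β} (hWgen : IsStrongGenerator H (W : Set β))
    (hWcard : W.card = sdim H) (hvW : v ∈ W) :
    sdim (rootedProd G H v) ≤ (sdim H - 1) + (Fintype.card α - 1) * ((boundary H).ncard - 1) := by
  classical
  have hvbd : v ∈ boundary H := mem_boundary_of_basis hH h2b hWgen hWcard hvW
  have hNα : Nonempty α := hG.nonempty
  have hnt : Nontrivial α := Fintype.one_lt_card_iff_nontrivial.mp h2a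
  obtain ⟨u1⟩ := hNα
  set Bd : Finset β := (boundary H).toFinset.erase v with hBd
  have hmemBd : ∀ z, z ∈ Bd ↔ z ≠ v ∧ z ∈ boundary H := by
    intro z; simp [hBd, Set.mem_toFinset, Finset.mem_erase]
  set S : Finset (α × β) :=
    (({u1} : Finset α) ×ˢ (W.erase v)) ∪ ((Finset.univ.erase u1) ×ˢ Bd) with hS
  have hmemS1 : ∀ z ∈ W.erase v, (u1, z) ∈ S := by
    intro z hz
    rw [hS]
    exact Finset.mem_union_left _ (Finset.mem_product.mpr ⟨Finset.mem_singleton_self u1, hz⟩)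
  have hmemS2 : ∀ (c : α) (z : β), c ≠ u1 → z ∈ Bd → (c, z) ∈ S := by
    intro c z hc hz
    rw [hS]
    exact Finset.mem_union_right _ (Finset.mem_product.mpr
      ⟨Finset.mem_erase.mpr ⟨hc, Finset.mem_univ c⟩, hz⟩)
  have hBdne : ∃ z, z ∈ Bd := by
    obtain ⟨u, hu, hne⟩ := exists_boundary_ne hH h2b v
    exact ⟨u, (hmemBd u).mpr ⟨hne, hu⟩⟩
  have hgen : IsStrongGenerator (rootedProd G H v) (S : Set (α × β)) := by
    rintro ⟨a, x⟩ ⟨b, y⟩ hne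
    by_cases hab : a = b
    · subst hab
      have hxy : x ≠ y := fun h => hne (by rw [h])
      have same_copy : ∀ z : β, StronglyResolves H z x y →
          StronglyResolves (rootedProd G H v) (a, z) (a, x) (a, y) := by
        intro z hz
        unfold StronglyResolves at hz ⊢
        rw [rp_dist_same hG hH, rp_dist_same hG hH, rp_dist_same hG hH, rp_dist_same hG hH]
        exact hz
      have cross_v : ∀ (c : α) (z : β), c ≠ a → StronglyResolves H v x y →
          StronglyResolves (rootedProd G H v) (c, z) (a, x) (a, y) := by
        intro c z hca hv'
        unfold StronglyResolves at hv' ⊢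
        rw [rp_dist_cross hG hH hca, rp_dist_cross hG hH hca, rp_dist_same hG hH,
          rp_dist_same hG hH]
        rcases hv' with h | h
        · left; omega
        · right; omega
      by_cases hau : a = u1
      · obtain ⟨w, hwW, hres⟩ := hWgen x y hxy
        by_cases hwv : w = v
        · obtain ⟨c, hc⟩ := exists_ne u1
          have hca : c ≠ a := by rw [hau]; exact hc
          obtain ⟨z, hz⟩ := hBdne
          exact ⟨(c, z), Finset.mem_coe.mpr (hmemS2 c z hc hz), cross_v c z hca (hwv ▸ hres)⟩
        · refine ⟨(a, w), ?_, same_copy w hres⟩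
          rw [hau]
          exact Finset.mem_coe.mpr (hmemS1 w (Finset.mem_erase.mpr
            ⟨hwv, Finset.mem_coe.mp hwW⟩))
      · obtain ⟨u, hub, hequ⟩ := exists_boundary_beyond hH x y
        obtain ⟨u', hub', hequ'⟩ := exists_boundary_beyond hH y x
        by_cases huv : u = v
        · have hu'v : u' ≠ v := by
            intro heq
            have hp : 0 < H.dist x y := hH.pos_dist_of_ne hxy
            have c1 : H.dist y x = H.dist x y := SimpleGraph.dist_comm
            rw [huv] at hequ
            rw [heq] at hequ'
            omega
          exact ⟨(a, u'), Finset.mem_coe.mpr (hmemS2 a u' hau ((hmemBd u').mpr ⟨hu'v, hub'⟩)),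
            same_copy u' (Or.inl hequ')⟩
        · exact ⟨(a, u), Finset.mem_coe.mpr (hmemS2 a u hau ((hmemBd u).mpr ⟨huv, hub⟩)),
            same_copy u (Or.inr hequ)⟩
    · have cross_res : ∀ (z : β), H.dist z v = H.dist z x + H.dist x v →
          StronglyResolves (rootedProd G H v) (a, z) (a, x) (b, y) := by
        intro z hz
        unfold StronglyResolves
        right
        rw [rp_dist_cross hG hH hab, rp_dist_same hG hH, rp_dist_cross hG hH hab]
        omega
      have cross_res' : ∀ (z : β), H.dist z v = H.dist z y + H.dist y v →
          StronglyResolves (rootedProd G H v) (b, z) (a, x) (b, y) := by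
        intro z hz
        unfold StronglyResolves
        left
        rw [rp_dist_cross hG hH (Ne.symm hab), rp_dist_same hG hH,
          rp_dist_cross hG hH (Ne.symm hab)]
        omega
      by_cases hau : a = u1
      · have hbu : b ≠ u1 := by
          intro heq
          exact hab (hau.trans heq.symm)
        by_cases hyv : y = v
        · obtain ⟨z, hz⟩ := hBdne
          refine ⟨(b, z), Finset.mem_coe.mpr (hmemS2 b z hbu hz), cross_res' z ?_⟩
          rw [hyv]
          simp [SimpleGraph.dist_self]
        · obtain ⟨u, hub, hequ⟩ := exists_boundary_beyond hH y v
          have huv : u ≠ v := by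
            intro heq
            have hp : 0 < H.dist y v := hH.pos_dist_of_ne hyv
            have h0 : H.dist v v = 0 := SimpleGraph.dist_self
            rw [heq] at hequ
            omega
          exact ⟨(b, u), Finset.mem_coe.mpr (hmemS2 b u hbu ((hmemBd u).mpr ⟨huv, hub⟩)),
            cross_res' u hequ⟩
      · by_cases hxv : x = v
        · obtain ⟨z, hz⟩ := hBdne
          refine ⟨(a, z), Finset.mem_coe.mpr (hmemS2 a z hau hz), cross_res z ?_⟩
          rw [hxv]
          simp [SimpleGraph.dist_self]
        · obtain ⟨u, hub, hequ⟩ := exists_boundary_beyond hH x v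
          have huv : u ≠ v := by
            intro heq
            have hp : 0 < H.dist x v := hH.pos_dist_of_ne hxv
            have h0 : H.dist v v = 0 := SimpleGraph.dist_self
            rw [heq] at hequ
            omega
          exact ⟨(a, u), Finset.mem_coe.mpr (hmemS2 a u hau ((hmemBd u).mpr ⟨huv, hub⟩)),
            cross_res u hequ⟩
  have hdisj : Disjoint (({u1} : Finset α) ×ˢ (W.erase v)) ((Finset.univ.erase u1) ×ˢ Bd) := by
    rw [Finset.disjoint_left]
    rintro ⟨c, z⟩ h1 h2
    rw [Finset.mem_product] at h1 h2
    exact (Finset.mem_erase.mp h2.1).1 (Finset.mem_singleton.mp h1.1)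
  have hBdcard : Bd.card = (boundary H).ncard - 1 := by
    rw [hBd, Finset.card_erase_of_mem (Set.mem_toFinset.mpr hvbd),
      Set.ncard_eq_toFinset_card']
  have hcard : S.card = (sdim H - 1) + (Fintype.card α - 1) * ((boundary H).ncard - 1) := by
    rw [hS, Finset.card_union_of_disjoint hdisj, Finset.card_product, Finset.card_product,
      Finset.card_singleton, one_mul, Finset.card_erase_of_mem hvW,
      Finset.card_erase_of_mem (Finset.mem_univ u1), Finset.card_univ, hWcard, hBdcard]
  calc sdim (rootedProd G H v) ≤ S.card := sdim_le_card hgen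
    _ = _ := hcard

end MainBounds

theorem statement16 {α β : Type*} [Fintype α] [Fintype β]
    (G : SimpleGraph α) (H : SimpleGraph β)
    (hG : G.Connected) (hH : H.Connected)
    {n : ℕ} (hn : Fintype.card α = n) (h2 : 2 ≤ n) (h2b : 2 ≤ Fintype.card β)
    (v : β) (hv : ∃ S : Finset β, IsStrongBasis H S ∧ v ∈ S) :
    (n : ℤ) * sdim H - 1 ≤ (sdim (rootedProd G H v) : ℤ) ∧
    (sdim (rootedProd G H v) : ℤ) ≤
      (((boundary H).ncard : ℤ) - 1) * ((n : ℤ) - 1) + sdim H - 1 := by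
  classical
  subst hn
  obtain ⟨Wb, ⟨hWgen, hWcard⟩, hvW⟩ := hv
  have hlb := lower_bound (v := v) hG hH h2b
  have hub := upper_bound hG hH h2 h2b hWgen hWcard hvW
  have h1m : 1 ≤ sdim H := one_le_sdim (by
    have hnt : Nontrivial β := Fintype.one_lt_card_iff_nontrivial.mp h2b
    obtain ⟨x, y, hxy⟩ := exists_pair_ne β
    exact ⟨x, y, hxy⟩)
  have hvbd : v ∈ boundary H := mem_boundary_of_basis hH h2b hWgen hWcard hvW
  have hBpos : 1 ≤ (boundary H).ncard :=
    (Set.ncard_pos (Set.toFinite _)).mpr ⟨v, hvbd⟩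
  constructor
  · have hcast : (Fintype.card α : ℤ) * (sdim H : ℤ) ≤ (sdim (rootedProd G H v) : ℤ) + 1 := by
      exact_mod_cast hlb
    linarith
  · have h1a : 1 ≤ Fintype.card α := by omega
    have hcast : (sdim (rootedProd G H v) : ℤ) ≤
        ((sdim H : ℤ) - 1) + ((Fintype.card α : ℤ) - 1) * (((boundary H).ncard : ℤ) - 1) := by
      have h := hub
      zify [h1m, h1a, hBpos] at h
      convert h using 2
    nlinarith [hcast]

end RootedStrong
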